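/- arXiv:2509.03468 — 2 statements merged into one kernel-verified Lean document; each statement's English description precedes it below -/
import Mathlib

section
/- Let ρ₁ : ℝⁿ \ {0} → [0,∞) be a radial integrable function with support in the closed unit ball and radial representative ρ̄₁ : (0,∞) → [0,∞) (i.e. ρ₁(x) = ρ̄₁(|x|)) satisfying ∫_{ℝⁿ} ρ₁(z) dz = n. Then the function Q_{ρ₁} : ℝⁿ \ {0} → [0,∞) defined by Q_{ρ₁}(z) := ∫_{|z|}^{1} ρ̄₁(r)/r dr for 0 < |z| < 1 and Q_{ρ₁}(z) := 0 for |z| ≥ 1 is integrable on ℝⁿ with ‖Q_{ρ₁}‖_{L¹(ℝⁿ)} = 1, and its support is contained in the closed unit ball. -/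
open MeasureTheory Metric Set Real
open scoped Classical

noncomputable section

open scoped ENNReal

/-- The potential `Q_{ρ₁}(z) = ∫_{|z|}^1 ρ̄₁(r)/r dr` (set to `0` for `|z| ≥ 1`) associated with a
radial integrable kernel `ρ₁` supported in the closed unit ball and normalized by
`∫ ρ₁ = n` is integrable on `ℝⁿ` with `‖Q_{ρ₁}‖_{L¹} = 1`, and is supported in the
closed unit ball. -/
theorem stmt_8 {n : ℕ} (hn : 0 < n)
    (ρ₁ : EuclideanSpace ℝ (Fin n) → ℝ) (ρbar : ℝ → ℝ)
    (hρ_nonneg : ∀ z, 0 ≤ ρ₁ z) (hρbar_nonneg : ∀ r, 0 < r → 0 ≤ ρbar r)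
    (hρ_int : Integrable ρ₁)
    (hρ_supp : Function.support ρ₁ ⊆ Metric.closedBall 0 1)
    (hradial : ∀ z : EuclideanSpace ℝ (Fin n), z ≠ 0 → ρ₁ z = ρbar ‖z‖)
    (hnorm : ∫ z, ρ₁ z = (n : ℝ))
    (Q : EuclideanSpace ℝ (Fin n) → ℝ)
    (hQ : Q = fun z => if ‖z‖ < 1 then ∫ r in ‖z‖..1, ρbar r / r else 0) :
    Integrable Q ∧ (∫ z, |Q z|) = 1 ∧ Function.support Q ⊆ Metric.closedBall 0 1 := by
  haveI : Nonempty (Fin n) := ⟨⟨0, hn⟩⟩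
  haveI : Nontrivial (EuclideanSpace ℝ (Fin n)) := inferInstance
  have hdim : Module.finrank ℝ (EuclideanSpace ℝ (Fin n)) = n := finrank_euclideanSpace_fin
  -- `ρ₁` vanishes outside the closed unit ball
  have hρ_zero : ∀ x : EuclideanSpace ℝ (Fin n), 1 < ‖x‖ → ρ₁ x = 0 := by
    intro x hx
    by_contra hne
    have hmem := hρ_supp hne
    rw [Metric.mem_closedBall, dist_zero_right] at hmem
    linarith
  -- the radial profile vanishes beyond `1`
  have hρbar_zero : ∀ s : ℝ, 1 < s → ρbar s = 0 := by
    intro s hs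
    have hs0 : (0:ℝ) < s := lt_trans one_pos hs
    set x : EuclideanSpace ℝ (Fin n) := EuclideanSpace.single ⟨0, hn⟩ s with hxdef
    have hxn : ‖x‖ = s := by
      rw [hxdef, EuclideanSpace.norm_single, Real.norm_eq_abs, abs_of_pos hs0]
    have hx0 : x ≠ 0 := by
      intro h0
      rw [h0, norm_zero] at hxn
      exact hs0.ne hxn
    have h1 := hradial x hx0
    rw [hxn] at h1
    rw [← h1]
    exact hρ_zero x (by rw [hxn]; exact hs)
  set Avol : ℝ≥0∞ := volume (Metric.ball (0 : EuclideanSpace ℝ (Fin n)) 1) with hAvoldef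
  have hA0 : Avol ≠ 0 := (measure_ball_pos volume 0 one_pos).ne'
  have hAtop : Avol ≠ ⊤ := measure_ball_lt_top.ne
  set A : ℝ := Avol.toReal with hAdef
  have hApos : 0 < A := ENNReal.toReal_pos hA0 hAtop
  set h : ℝ → EuclideanSpace ℝ (Fin n) → ℝ :=
    fun t x => if t ≤ ‖x‖ then ρ₁ x / ‖x‖ ^ n else 0 with hhdef
  have hnonneg : ∀ t x, 0 ≤ h t x := by
    intro t x
    rw [hhdef]
    dsimp only
    split
    · exact div_nonneg (hρ_nonneg x) (pow_nonneg (norm_nonneg x) n)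
    · exact le_refl 0
  set Λ : ℝ → ℝ≥0∞ := fun t => ∫⁻ x, ENNReal.ofReal (h t x) with hΛdef
  -- measurability of `h t`
  have hhm : ∀ t : ℝ, AEStronglyMeasurable (h t) volume := by
    intro t
    have hrw : h t = Set.indicator {x : EuclideanSpace ℝ (Fin n) | t ≤ ‖x‖}
        (fun x => ρ₁ x / ‖x‖ ^ n) := by
      ext x
      rw [hhdef, Set.indicator]
      simp only [Set.mem_setOf_eq]
    rw [hrw]
    exact ((hρ_int.aestronglyMeasurable.aemeasurable.div
      ((measurable_norm.pow_const n).aemeasurable)).aestronglyMeasurable).indicator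
      (measurableSet_le measurable_const measurable_norm)
  -- integrability of `h t` for `t > 0`
  have hint : ∀ t : ℝ, 0 < t → Integrable (h t) := by
    intro t ht
    refine Integrable.mono (hρ_int.const_mul ((t ^ n)⁻¹)) (hhm t) ?_
    filter_upwards with x
    have hb : h t x ≤ (t ^ n)⁻¹ * ρ₁ x := by
      rw [hhdef]
      dsimp only
      split
      · rename_i hc
        rw [div_eq_inv_mul]
        exact mul_le_mul_of_nonneg_right
          (inv_anti₀ (pow_pos ht n) (pow_le_pow_left₀ ht.le hc n)) (hρ_nonneg x)
      · exact mul_nonneg (by positivity) (hρ_nonneg x)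
    calc ‖h t x‖ = h t x := by rw [Real.norm_eq_abs, abs_of_nonneg (hnonneg t x)]
      _ ≤ (t ^ n)⁻¹ * ρ₁ x := hb
      _ ≤ ‖(t ^ n)⁻¹ * ρ₁ x‖ := le_abs_self _
  have hsphere : ∀ r : ℝ, volume (Metric.sphere (0 : EuclideanSpace ℝ (Fin n)) r) = 0 :=
    fun r => Measure.addHaar_sphere volume 0 r
  have hzero_null : volume ({0} : Set (EuclideanSpace ℝ (Fin n))) = 0 := by
    have h0 := hsphere 0
    rwa [Metric.sphere_zero] at h0
  have hane : ∀ᵐ z : EuclideanSpace ℝ (Fin n), z ≠ 0 := by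
    rw [ae_iff]
    convert hzero_null using 2
    ext z
    simp
  -- the polar-coordinates computation
  have hkey : ∀ t : ℝ, 0 < t → t ≤ 1 →
      ∫ x, h t x = (n : ℝ) * A * ∫ s in t..1, ρbar s / s := by
    intro t ht ht1
    have e1 : ∫ x, h t x = ∫ x : EuclideanSpace ℝ (Fin n),
        (fun s : ℝ => if t ≤ s then ρbar s / s ^ n else 0) ‖x‖ := by
      refine integral_congr_ae ?_
      filter_upwards [hane] with z hz
      rw [hhdef]
      dsimp only
      rw [hradial z hz]
    rw [e1, MeasureTheory.integral_fun_norm_addHaar volume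
      (fun s : ℝ => if t ≤ s then ρbar s / s ^ n else 0), hdim, nsmul_eq_mul, smul_eq_mul,
      ← mul_assoc]
    congr 1
    have e2 : ∀ s ∈ Ioi (0:ℝ), s ^ (n - 1) • (if t ≤ s then ρbar s / s ^ n else 0)
        = Set.indicator (Icc t 1) (fun s => ρbar s / s) s := by
      intro s hs
      have hs0 : (0:ℝ) < s := hs
      rw [smul_eq_mul, Set.indicator]
      by_cases hts : t ≤ s
      · by_cases hs1 : s ≤ 1
        · rw [if_pos hts, if_pos (Set.mem_Icc.mpr ⟨hts, hs1⟩)]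
          have hpow : s ^ n = s ^ (n - 1) * s := by
            rw [← pow_succ, Nat.sub_add_cancel hn]
          rw [hpow]
          field_simp
        · rw [if_pos hts, if_neg (by
            intro hmem
            exact hs1 hmem.2), hρbar_zero s (lt_of_not_ge hs1), zero_div, mul_zero]
      · rw [if_neg hts, if_neg (fun hmem => hts hmem.1), mul_zero]
    have hsub : Icc t 1 ⊆ Ioi (0:ℝ) := fun s hs => lt_of_lt_of_le ht hs.1
    rw [setIntegral_congr_fun measurableSet_Ioi e2,
      setIntegral_indicator measurableSet_Icc,
      Set.inter_eq_self_of_subset_right hsub,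
      MeasureTheory.integral_Icc_eq_integral_Ioc, ← intervalIntegral.integral_of_le ht1]
  -- values of `Λ`
  have hΛlow : ∀ t : ℝ, 0 < t → t ≤ 1 →
      Λ t = ENNReal.ofReal ((n : ℝ) * A * ∫ s in t..1, ρbar s / s) := by
    intro t ht ht1
    rw [hΛdef]
    dsimp only
    rw [← MeasureTheory.ofReal_integral_eq_lintegral_ofReal (hint t ht)
      (Filter.Eventually.of_forall (hnonneg t)), hkey t ht ht1]
  have hΛhigh : ∀ t : ℝ, 1 ≤ t → Λ t = 0 := by
    intro t ht
    rw [hΛdef]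
    dsimp only
    have hsp : ∀ᵐ x : EuclideanSpace ℝ (Fin n),
        x ∉ Metric.sphere (0 : EuclideanSpace ℝ (Fin n)) 1 := by
      rw [ae_iff]
      convert hsphere 1 using 2
      ext x
      simp
    have hz : ∀ᵐ x : EuclideanSpace ℝ (Fin n), ENNReal.ofReal (h t x) = 0 := by
      filter_upwards [hsp] with x hx
      rw [hhdef]
      dsimp only
      split
      · rename_i hc
        have h1 : 1 < ‖x‖ := by
          rcases lt_or_eq_of_le (le_trans ht hc) with h1 | h1
          · exact h1
          · exact absurd (by rw [mem_sphere_zero_iff_norm]; exact h1.symm) hx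
        rw [hρ_zero x h1, zero_div, ENNReal.ofReal_zero]
      · rw [ENNReal.ofReal_zero]
    rw [lintegral_congr_ae hz, lintegral_zero]
  -- nonnegativity of `Q`
  have hQnn : ∀ z, 0 ≤ Q z := by
    intro z
    rw [hQ]
    dsimp only
    split
    · rename_i hz
      refine intervalIntegral.integral_nonneg hz.le ?_
      intro u hu
      rcases lt_or_eq_of_le (le_trans (norm_nonneg z) hu.1) with hu0 | hu0
      · exact div_nonneg (hρbar_nonneg u hu0) hu0.le
      · rw [← hu0, div_zero]
    · exact le_refl 0
  -- relation between `Q` and `Λ`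
  have hQΛ : ∀ z : EuclideanSpace ℝ (Fin n), z ≠ 0 →
      Λ ‖z‖ = (n : ℝ≥0∞) * Avol * ENNReal.ofReal (Q z) := by
    intro z hz
    have hz0 : 0 < ‖z‖ := norm_pos_iff.mpr hz
    rw [hQ]
    dsimp only
    by_cases h1 : ‖z‖ < 1
    · rw [if_pos h1, hΛlow ‖z‖ hz0 h1.le,
        ENNReal.ofReal_mul (by positivity : (0:ℝ) ≤ (n : ℝ) * A)]
      congr 1
      rw [ENNReal.ofReal_mul (by positivity : (0:ℝ) ≤ (n : ℝ)), ENNReal.ofReal_natCast,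
        hAdef, ENNReal.ofReal_toReal hAtop]
    · rw [if_neg h1, hΛhigh ‖z‖ (le_of_not_gt h1), ENNReal.ofReal_zero, mul_zero]
  -- measurability of `Q`
  have hΛanti : Antitone Λ := by
    intro t₁ t₂ hle
    rw [hΛdef]
    refine lintegral_mono fun x => ?_
    refine ENNReal.ofReal_le_ofReal ?_
    rw [hhdef]
    dsimp only
    by_cases hc : t₂ ≤ ‖x‖
    · rw [if_pos hc, if_pos (le_trans hle hc)]
    · rw [if_neg hc]
      split
      · exact div_nonneg (hρ_nonneg x) (pow_nonneg (norm_nonneg x) n)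
      · exact le_refl 0
  have hnA0 : (n : ℝ≥0∞) * Avol ≠ 0 := by
    refine mul_ne_zero ?_ hA0
    simp [hn.ne']
  have hnAtop : (n : ℝ≥0∞) * Avol ≠ ⊤ := ENNReal.mul_ne_top (ENNReal.natCast_ne_top n) hAtop
  set Ψ : EuclideanSpace ℝ (Fin n) → ℝ :=
    fun z => (((n : ℝ≥0∞) * Avol)⁻¹ * Λ ‖z‖).toReal with hΨdef
  have hΨmeas : Measurable Ψ := by
    rw [hΨdef]
    exact ENNReal.measurable_toReal.comp
      (measurable_const.mul (hΛanti.measurable.comp measurable_norm))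
  have hQae : Q =ᵐ[volume] Ψ := by
    filter_upwards [hane] with z hz
    rw [hΨdef]
    dsimp only
    rw [hQΛ z hz, ← mul_assoc, ENNReal.inv_mul_cancel hnA0 hnAtop, one_mul,
      ENNReal.toReal_ofReal (hQnn z)]
  have hQm : AEStronglyMeasurable Q volume :=
    hΨmeas.aestronglyMeasurable.congr hQae.symm
  -- Tonelli computation
  have hKm : AEMeasurable (Function.uncurry fun (z x : EuclideanSpace ℝ (Fin n)) =>
      ENNReal.ofReal (h ‖z‖ x)) (volume.prod volume) := by
    have hbase : AEMeasurable (fun p : EuclideanSpace ℝ (Fin n) × EuclideanSpace ℝ (Fin n) =>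
        ENNReal.ofReal (ρ₁ p.2 / ‖p.2‖ ^ n)) (volume.prod volume) := by
      refine ENNReal.measurable_ofReal.comp_aemeasurable ?_
      exact (hρ_int.aestronglyMeasurable.aemeasurable.comp_quasiMeasurePreserving
        Measure.quasiMeasurePreserving_snd).div
        (((measurable_norm.pow_const n).comp measurable_snd).aemeasurable)
    have hset : MeasurableSet {p : EuclideanSpace ℝ (Fin n) × EuclideanSpace ℝ (Fin n) |
        ‖p.1‖ ≤ ‖p.2‖} :=
      measurableSet_le (measurable_norm.comp measurable_fst) (measurable_norm.comp measurable_snd)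
    have hrw : (Function.uncurry fun (z x : EuclideanSpace ℝ (Fin n)) =>
        ENNReal.ofReal (h ‖z‖ x)) =
        Set.indicator {p : EuclideanSpace ℝ (Fin n) × EuclideanSpace ℝ (Fin n) | ‖p.1‖ ≤ ‖p.2‖}
          (fun p => ENNReal.ofReal (ρ₁ p.2 / ‖p.2‖ ^ n)) := by
      ext p
      rw [Function.uncurry, hhdef, Set.indicator]
      simp only [Set.mem_setOf_eq]
      split_ifs <;> simp
    rw [hrw]
    exact hbase.indicator hset
  have hTon : ∫⁻ z : EuclideanSpace ℝ (Fin n), Λ ‖z‖ = (n : ℝ≥0∞) * Avol := by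
    have hswap : ∫⁻ z : EuclideanSpace ℝ (Fin n), ∫⁻ x : EuclideanSpace ℝ (Fin n),
          ENNReal.ofReal (h ‖z‖ x)
        = ∫⁻ x : EuclideanSpace ℝ (Fin n), ∫⁻ z : EuclideanSpace ℝ (Fin n),
          ENNReal.ofReal (h ‖z‖ x) :=
      lintegral_lintegral_swap hKm
    have hinner : ∀ᵐ x : EuclideanSpace ℝ (Fin n),
        (∫⁻ z : EuclideanSpace ℝ (Fin n), ENNReal.ofReal (h ‖z‖ x))
          = ENNReal.ofReal (ρ₁ x) * Avol := by
      filter_upwards [hane] with x hx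
      have hx0 : 0 < ‖x‖ := norm_pos_iff.mpr hx
      have hrw : ∀ z : EuclideanSpace ℝ (Fin n), ENNReal.ofReal (h ‖z‖ x)
          = Set.indicator (Metric.closedBall (0 : EuclideanSpace ℝ (Fin n)) ‖x‖)
              (fun _ => ENNReal.ofReal (ρ₁ x / ‖x‖ ^ n)) z := by
        intro z
        rw [hhdef, Set.indicator]
        simp only [Metric.mem_closedBall, dist_zero_right]
        split_ifs <;> simp
      rw [lintegral_congr hrw, lintegral_indicator measurableSet_closedBall,
        setLIntegral_const, Measure.addHaar_closedBall volume 0 (norm_nonneg x), hdim,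
        ← hAvoldef, ← mul_assoc,
        ← ENNReal.ofReal_mul (div_nonneg (hρ_nonneg x) (pow_nonneg (norm_nonneg x) n)),
        div_mul_cancel₀ _ (pow_ne_zero n hx0.ne')]
    calc ∫⁻ z : EuclideanSpace ℝ (Fin n), Λ ‖z‖ = ∫⁻ x, ∫⁻ z : EuclideanSpace ℝ (Fin n), ENNReal.ofReal (h ‖z‖ x) := by
          rw [hΛdef]; exact hswap
      _ = ∫⁻ x, ENNReal.ofReal (ρ₁ x) * Avol := lintegral_congr_ae hinner
      _ = (∫⁻ x, ENNReal.ofReal (ρ₁ x)) * Avol := lintegral_mul_const' Avol _ hAtop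
      _ = ENNReal.ofReal ((n : ℝ)) * Avol := by
          rw [← MeasureTheory.ofReal_integral_eq_lintegral_ofReal hρ_int
            (Filter.Eventually.of_forall hρ_nonneg), hnorm]
      _ = (n : ℝ≥0∞) * Avol := by rw [ENNReal.ofReal_natCast]
  -- the `L¹` norm computation
  have hlint : ∫⁻ z, ENNReal.ofReal (Q z) = 1 := by
    have h1 : ∫⁻ z : EuclideanSpace ℝ (Fin n), Λ ‖z‖ = ((n : ℝ≥0∞) * Avol) * ∫⁻ z, ENNReal.ofReal (Q z) := by
      rw [← lintegral_const_mul' _ _ hnAtop]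
      refine lintegral_congr_ae ?_
      filter_upwards [hane] with z hz
      exact hQΛ z hz
    have h2 : ((n : ℝ≥0∞) * Avol) * ∫⁻ z, ENNReal.ofReal (Q z)
        = ((n : ℝ≥0∞) * Avol) * 1 := by
      rw [mul_one, ← h1, hTon]
    exact (ENNReal.mul_right_inj hnA0 hnAtop).mp h2
  have hQint : Integrable Q := by
    refine ⟨hQm, ?_⟩
    rw [hasFiniteIntegral_iff_norm]
    have hrw : ∀ z, ENNReal.ofReal ‖Q z‖ = ENNReal.ofReal (Q z) := by
      intro z
      rw [Real.norm_eq_abs, abs_of_nonneg (hQnn z)]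
    rw [lintegral_congr hrw, hlint]
    exact ENNReal.one_lt_top
  have habs : (∫ z, |Q z|) = ∫ z, Q z :=
    integral_congr_ae (Filter.Eventually.of_forall fun z => abs_of_nonneg (hQnn z))
  have hint2 : ∫ z, Q z = 1 := by
    rw [MeasureTheory.integral_eq_lintegral_of_nonneg_ae
      (Filter.Eventually.of_forall hQnn) hQm, hlint, ENNReal.toReal_one]
  refine ⟨hQint, habs.trans hint2, ?_⟩
  intro z hzQ
  rw [Metric.mem_closedBall, dist_zero_right]
  by_contra hcon
  apply hzQ
  rw [hQ]
  dsimp only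
  rw [if_neg (by push_neg at hcon; linarith)]
end
end

section
/- Let μ ∈ (0,1), m' ∈ [μ−1, 0), and let a : ℝⁿ × ℝⁿ → ℂ be smooth with |a(x,ξ)| ≥ C₀ ⟨ξ⟩^{m'} for all x, ξ and |∂_x^β ∂_ξ^α a(x,ξ)| ≤ C_{α,β} ⟨ξ⟩^{−|α|+μ|β|} |a(x,ξ)| for all x, ξ and all multi-indices α, β. For ε ∈ (0,1) set a_ε(x,ξ) := a(x, εξ). Then for all multi-indices α, β with α ≠ 0 there is a constant C'_{α,β} > 0, independent of ε, such that |∂_x^β ∂_ξ^α (1/a_ε)(x,ξ)| ≤ C'_{α,β} · ε^{−m'} · ⟨ξ⟩^{−m'−|α|+μ|β|} for all x, ξ ∈ ℝⁿ and all ε ∈ (0,1). -/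
open MeasureTheory Metric Set Real

noncomputable section

/-- Partial derivative in coordinate direction `i`. -/
def pd {F : Type*} [NormedAddCommGroup F] [NormedSpace ℝ F] {n : ℕ} (i : Fin n)
    (f : EuclideanSpace ℝ (Fin n) → F) : EuclideanSpace ℝ (Fin n) → F :=
  fun x => fderiv ℝ f x (EuclideanSpace.single i 1)

/-- Iterated multi-index partial derivative `∂^α = ∂₁^{α₁} ∘ ⋯ ∘ ∂ₙ^{αₙ}`. -/
def pdM {F : Type*} [NormedAddCommGroup F] [NormedSpace ℝ F] {n : ℕ} (α : Fin n → ℕ)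
    (f : EuclideanSpace ℝ (Fin n) → F) : EuclideanSpace ℝ (Fin n) → F :=
  (List.ofFn fun i : Fin n => (pd i)^[α i]).foldr (· ∘ ·) id f

/-- `∂_ξ^α` applied to a symbol `a(x, ξ)` in the second variable. -/
def pdXi {F : Type*} [NormedAddCommGroup F] [NormedSpace ℝ F] {n : ℕ} (α : Fin n → ℕ)
    (q : EuclideanSpace ℝ (Fin n) → EuclideanSpace ℝ (Fin n) → F) :
    EuclideanSpace ℝ (Fin n) → EuclideanSpace ℝ (Fin n) → F :=
  fun x => pdM α (q x)

/-- `∂_x^β` applied to a symbol `a(x, ξ)` in the first variable. -/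
def pdX {F : Type*} [NormedAddCommGroup F] [NormedSpace ℝ F] {n : ℕ} (β : Fin n → ℕ)
    (q : EuclideanSpace ℝ (Fin n) → EuclideanSpace ℝ (Fin n) → F) :
    EuclideanSpace ℝ (Fin n) → EuclideanSpace ℝ (Fin n) → F :=
  fun x ξ => pdM β (fun x' => q x' ξ) x

/-- The Japanese bracket `⟨ξ⟩ = (1 + |ξ|²)^{1/2}`. -/
def jb {n : ℕ} (ξ : EuclideanSpace ℝ (Fin n)) : ℝ := Real.sqrt (1 + ‖ξ‖ ^ 2)

namespace S17


variable {n : ℕ}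

abbrev EE (n : ℕ) := EuclideanSpace ℝ (Fin n)
abbrev PP (n : ℕ) := EE n × EE n

/-- smoothness grade -/
abbrev SS : WithTop ℕ∞ := ((⊤ : ℕ∞) : WithTop ℕ∞)

lemma one_le_SS : 1 ≤ SS := by
  rw [show (1 : WithTop ℕ∞) = ((1 : ℕ∞) : WithTop ℕ∞) from rfl]
  exact_mod_cast le_top
lemma SS_add_one : SS + 1 ≤ SS := by
  have : SS + 1 = SS := by
    rw [show (1 : WithTop ℕ∞) = ((1 : ℕ∞) : WithTop ℕ∞) from rfl]
    exact_mod_cast top_add 1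
  exact this.le

def Dd (v : PP n) (f : PP n → ℂ) : PP n → ℂ := fun p => fderiv ℝ f p v

lemma Dd_contDiff {f : PP n → ℂ} (hf : ContDiff ℝ SS f) (v : PP n) :
    ContDiff ℝ SS (Dd v f) := by
  have h1 : ContDiff ℝ SS (fderiv ℝ f) := hf.fderiv_right SS_add_one
  exact (ContinuousLinearMap.apply ℝ ℂ v).contDiff.comp h1

lemma Dd_diff {E' F' : Type*} [NormedAddCommGroup E'] [NormedSpace ℝ E']
    [NormedAddCommGroup F'] [NormedSpace ℝ F'] {f : E' → F'} (hf : ContDiff ℝ SS f) :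
    Differentiable ℝ f :=
  hf.differentiable (ne_of_gt (lt_of_lt_of_le zero_lt_one one_le_SS))

lemma Dd_add {f g : PP n → ℂ} (hf : ContDiff ℝ SS f) (hg : ContDiff ℝ SS g) (v : PP n) :
    Dd v (fun p => f p + g p) = fun p => Dd v f p + Dd v g p := by
  funext p
  simp [Dd, fderiv_fun_add ((Dd_diff hf) p) ((Dd_diff hg) p)]

lemma Dd_smul {f : PP n → ℂ} (hf : ContDiff ℝ SS f) (c : ℝ) (v : PP n) :
    Dd v (fun p => c • f p) = fun p => c • Dd v f p := by
  funext p
  show fderiv ℝ (fun p => c • f p) p v = c • fderiv ℝ f p v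
  rw [fderiv_fun_const_smul ((Dd_diff hf) p) c]
  rfl

lemma Dd_mul {f g : PP n → ℂ} (hf : ContDiff ℝ SS f) (hg : ContDiff ℝ SS g) (v : PP n) :
    Dd v (fun p => f p * g p) = fun p => Dd v f p * g p + f p * Dd v g p := by
  funext p
  rw [Dd, fderiv_fun_mul ((Dd_diff hf) p) ((Dd_diff hg) p)]
  simp [Dd]
  ring

lemma Dd_inv {f : PP n → ℂ} (hf : ContDiff ℝ SS f) (h0 : ∀ p, f p ≠ 0) (v : PP n) :
    Dd v (fun p => (f p)⁻¹) = fun p => -((f p)⁻¹ * (f p)⁻¹ * Dd v f p) := by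
  funext p
  have h1 : DifferentiableAt ℝ (Inv.inv : ℂ → ℂ) (f p) := differentiableAt_inv (h0 p)
  have h2 : (fun q => (f q)⁻¹) = (Inv.inv : ℂ → ℂ) ∘ f := rfl
  rw [Dd, h2, fderiv_comp p h1 ((Dd_diff hf) p), fderiv_inv' (h0 p)]
  simp [Dd, ContinuousLinearMap.mulLeftRight_apply]
  ring

lemma Dd_swap {f : PP n → ℂ} (hf : ContDiff ℝ SS f) (v w : PP n) :
    Dd v (Dd w f) = Dd w (Dd v f) := by
  have hdf : ContDiff ℝ SS (fderiv ℝ f) := hf.fderiv_right SS_add_one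
  have key : ∀ (u z : PP n) (p : PP n),
      Dd u (Dd z f) p = fderiv ℝ (fderiv ℝ f) p u z := by
    intro u z p
    have h2 : (Dd z f) = (fun L : PP n →L[ℝ] ℂ => L z) ∘ (fderiv ℝ f) := rfl
    have h3 : (fun L : PP n →L[ℝ] ℂ => L z)
        = (ContinuousLinearMap.apply ℝ ℂ z : (PP n →L[ℝ] ℂ) →L[ℝ] ℂ) := rfl
    rw [Dd, h2, h3, fderiv_comp p ((ContinuousLinearMap.apply ℝ ℂ z).differentiableAt)
      ((Dd_diff hdf) p)]
    simp
  funext p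
  rw [key, key]
  exact second_derivative_symmetric (fun y => ((Dd_diff hf) y).hasFDerivAt)
    (((Dd_diff hdf) p).hasFDerivAt) v w


/-! ### Words of partial-derivative operators -/

abbrev Op (n : ℕ) := Bool × Fin n

def dir (o : Op n) : PP n :=
  if o.1 then (EuclideanSpace.single o.2 1, 0) else (0, EuclideanSpace.single o.2 1)

def wOp (μ : ℝ) (o : Op n) : ℝ := if o.1 then μ else -1

def wt (μ : ℝ) (u : List (Op n)) : ℝ := (u.map (wOp μ)).sum

@[simp] lemma wt_nil (μ : ℝ) : wt μ ([] : List (Op n)) = 0 := rfl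
lemma wt_cons (μ : ℝ) (o : Op n) (u : List (Op n)) : wt μ (o :: u) = wOp μ o + wt μ u := by
  simp [wt]
lemma wt_append (μ : ℝ) (u v : List (Op n)) : wt μ (u ++ v) = wt μ u + wt μ v := by
  simp [wt]
lemma wt_reverse (μ : ℝ) (u : List (Op n)) : wt μ u.reverse = wt μ u := by
  rw [wt, wt, List.map_reverse, List.sum_reverse]

def Dl (u : List (Op n)) (f : PP n → ℂ) : PP n → ℂ := u.foldr (fun o g => Dd (dir o) g) f

def Dr (u : List (Op n)) (f : PP n → ℂ) : PP n → ℂ := u.foldl (fun g o => Dd (dir o) g) f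

@[simp] lemma Dl_nil (f : PP n → ℂ) : Dl [] f = f := rfl
lemma Dl_cons (o : Op n) (u : List (Op n)) (f : PP n → ℂ) :
    Dl (o :: u) f = Dd (dir o) (Dl u f) := rfl
@[simp] lemma Dr_nil (f : PP n → ℂ) : Dr [] f = f := rfl
lemma Dr_cons (o : Op n) (u : List (Op n)) (f : PP n → ℂ) :
    Dr (o :: u) f = Dr u (Dd (dir o) f) := rfl
lemma Dl_append (u v : List (Op n)) (f : PP n → ℂ) :
    Dl (u ++ v) f = Dl u (Dl v f) := by
  simp [Dl, List.foldr_append]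
lemma Dr_append (u v : List (Op n)) (f : PP n → ℂ) :
    Dr (u ++ v) f = Dr v (Dr u f) := by
  simp [Dr, List.foldl_append]

lemma Dl_contDiff {f : PP n → ℂ} (hf : ContDiff ℝ SS f) (u : List (Op n)) :
    ContDiff ℝ SS (Dl u f) := by
  induction u with
  | nil => exact hf
  | cons o u ih => exact Dd_contDiff ih (dir o)

lemma Dr_contDiff {f : PP n → ℂ} (hf : ContDiff ℝ SS f) (u : List (Op n)) :
    ContDiff ℝ SS (Dr u f) := by
  induction u generalizing f with
  | nil => exact hf
  | cons o u ih => exact ih (Dd_contDiff hf (dir o))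

lemma Dl_eq_Dr (u : List (Op n)) (f : PP n → ℂ) : Dl u f = Dr u.reverse f := by
  induction u with
  | nil => rfl
  | cons o u ih =>
      rw [Dl_cons, ih, List.reverse_cons, Dr_append]
      rfl

lemma Dl_perm {f : PP n → ℂ} (hf : ContDiff ℝ SS f) {u v : List (Op n)}
    (h : u.Perm v) : Dl u f = Dl v f := by
  induction h with
  | nil => rfl
  | cons o _ ih => rw [Dl_cons, Dl_cons, ih]
  | swap o₁ o₂ l =>
      rw [Dl_cons, Dl_cons, Dl_cons, Dl_cons]
      exact Dd_swap (Dl_contDiff hf l) _ _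
  | trans _ _ ih₁ ih₂ => rw [ih₁, ih₂]

/-! ### Sums and scalar multiples under words -/

def sumL (LF : List (PP n → ℂ)) : PP n → ℂ := fun p => (LF.map (fun f => f p)).sum

lemma sumL_contDiff {LF : List (PP n → ℂ)} (h : ∀ f ∈ LF, ContDiff ℝ SS f) :
    ContDiff ℝ SS (sumL LF) := by
  induction LF with
  | nil =>
      have : sumL ([] : List (PP n → ℂ)) = fun _ => (0:ℂ) := by funext p; simp [sumL]
      rw [this]; exact contDiff_const
  | cons f LF ih =>
      have : sumL (f :: LF) = fun p => f p + sumL LF p := by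
        funext p; simp [sumL]
      rw [this]
      exact (h f (by simp)).add (ih fun g hg => h g (by simp [hg]))

lemma Dd_sumL {LF : List (PP n → ℂ)} (h : ∀ f ∈ LF, ContDiff ℝ SS f) (v : PP n) :
    Dd v (sumL LF) = sumL (LF.map (Dd v)) := by
  induction LF with
  | nil =>
      funext p
      have : sumL ([] : List (PP n → ℂ)) = fun _ => (0 : ℂ) := by funext q; simp [sumL]
      rw [this, Dd]
      simp [fderiv_const, sumL]
  | cons f LF ih =>
      have h1 : sumL (f :: LF) = fun p => f p + sumL LF p := by funext p; simp [sumL]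
      have h2 : ContDiff ℝ SS (sumL LF) := sumL_contDiff fun g hg => h g (by simp [hg])
      rw [h1, Dd_add (h f (by simp)) h2 v, ih fun g hg => h g (by simp [hg])]
      funext p
      simp [sumL]

lemma Dr_sumL {LF : List (PP n → ℂ)} (u : List (Op n)) (h : ∀ f ∈ LF, ContDiff ℝ SS f) :
    Dr u (sumL LF) = sumL (LF.map (Dr u)) := by
  induction u generalizing LF with
  | nil =>
      have key : ∀ (L : List (PP n → ℂ)), List.map (Dr ([] : List (Op n))) L = L := by
        intro L
        induction L with
        | nil => rfl
        | cons f L ihL => simp only [List.map_cons, Dr_nil, ihL]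
      rw [key, Dr_nil]
  | cons o u ih =>
      rw [Dr_cons, Dd_sumL h (dir o), ih (by
        intro g hg
        obtain ⟨f, hf, rfl⟩ := List.mem_map.mp hg
        exact Dd_contDiff (h f hf) (dir o)), List.map_map]
      rfl

lemma Dr_smul {f : PP n → ℂ} (hf : ContDiff ℝ SS f) (c : ℝ) (u : List (Op n)) :
    Dr u (fun p => c • f p) = fun p => c • Dr u f p := by
  induction u generalizing f with
  | nil => simp
  | cons o u ih =>
      rw [Dr_cons, Dd_smul hf c (dir o), ih (Dd_contDiff hf (dir o))]
      rfl

lemma norm_listSum (l : List ℂ) : ‖l.sum‖ ≤ (l.map (fun z => ‖z‖)).sum := by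
  induction l with
  | nil => simp
  | cons z l ih =>
      simp only [List.sum_cons, List.map_cons]
      exact (norm_add_le _ _).trans (by linarith)



lemma jb_pos (ξ : EE n) : 0 < jb ξ := Real.sqrt_pos.mpr (by positivity)

lemma one_le_jb (ξ : EE n) : 1 ≤ jb ξ := by
  rw [show (1:ℝ) = Real.sqrt 1 from (Real.sqrt_one).symm]
  exact Real.sqrt_le_sqrt (by nlinarith [sq_nonneg ‖ξ‖])

/-! ### Spec lists: products of factors `(A p)⁻¹` and `Dl w A p` -/

def interp (A : PP n → ℂ) : Option (List (Op n)) → PP n → ℂ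
  | none => fun p => (A p)⁻¹
  | some w => Dl w A

def prodL (A : PP n → ℂ) (Fs : List (Option (List (Op n)))) : PP n → ℂ :=
  fun p => (Fs.map (fun F => interp A F p)).prod

def swt (μ : ℝ) (Fs : List (Option (List (Op n)))) : ℝ :=
  (Fs.map (fun F => match F with | none => (0:ℝ) | some w => wt μ w)).sum

def cnt (Fs : List (Option (List (Op n)))) : ℤ :=
  (Fs.map (fun F => match F with | none => (-1:ℤ) | some _ => 1)).sum

variable {A : PP n → ℂ}

lemma interp_contDiff (hA : ContDiff ℝ SS A) (h0 : ∀ p, A p ≠ 0)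
    (F : Option (List (Op n))) : ContDiff ℝ SS (interp A F) := by
  cases F with
  | none => exact hA.inv h0
  | some w => exact Dl_contDiff hA w

lemma prodL_cons (A : PP n → ℂ) (F : Option (List (Op n))) (Fs) :
    prodL A (F :: Fs) = fun p => interp A F p * prodL A Fs p := by
  funext p; simp [prodL]

lemma prodL_contDiff (hA : ContDiff ℝ SS A) (h0 : ∀ p, A p ≠ 0)
    (Fs : List (Option (List (Op n)))) : ContDiff ℝ SS (prodL A Fs) := by
  induction Fs with
  | nil =>
      have : prodL A ([] : List (Option (List (Op n)))) = fun _ => (1:ℂ) := by funext p; simp [prodL]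
      rw [this]; exact contDiff_const
  | cons F Fs ih =>
      rw [prodL_cons]
      exact (interp_contDiff hA h0 F).mul ih

lemma prodL_append (A : PP n → ℂ) (Fs Gs : List (Option (List (Op n)))) :
    prodL A (Fs ++ Gs) = fun p => prodL A Fs p * prodL A Gs p := by
  funext p; simp [prodL]

def dSpec (o : Op n) : Option (List (Op n)) → ℝ × List (Option (List (Op n)))
  | none => (-1, [none, none, some [o]])
  | some w => (1, [some (o :: w)])

lemma Dd_interp (hA : ContDiff ℝ SS A) (h0 : ∀ p, A p ≠ 0) (o : Op n)
    (F : Option (List (Op n))) :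
    Dd (dir o) (interp A F) = fun p => (dSpec o F).1 • prodL A (dSpec o F).2 p := by
  cases F with
  | none =>
      rw [show interp A none = fun p => (A p)⁻¹ from rfl, Dd_inv hA h0 (dir o)]
      funext p
      simp [dSpec, prodL, interp, Dl]
      ring
  | some w =>
      funext p
      simp [dSpec, prodL, interp, Dl_cons, Dd]

def expd (o : Op n) : List (Option (List (Op n))) → List (ℝ × List (Option (List (Op n))))
  | [] => []
  | F :: Fs => ((dSpec o F).1, (dSpec o F).2 ++ Fs) ::
      (expd o Fs).map (fun sG => (sG.1, F :: sG.2))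

lemma mul_listSum (c : ℂ) {γ : Type*} (l : List γ) (g : γ → ℂ) :
    c * (l.map g).sum = (l.map (fun x => c * g x)).sum := by
  induction l with
  | nil => simp
  | cons x l ih => simp [mul_add, ih]

lemma Dd_prodL (hA : ContDiff ℝ SS A) (h0 : ∀ p, A p ≠ 0) (o : Op n)
    (Fs : List (Option (List (Op n)))) :
    Dd (dir o) (prodL A Fs)
      = fun p => ((expd o Fs).map (fun sG => sG.1 • prodL A sG.2 p)).sum := by
  induction Fs with
  | nil =>
      have : prodL A ([] : List (Option (List (Op n)))) = fun _ => (1:ℂ) := by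
        funext p; simp [prodL]
      rw [this]
      funext p
      show fderiv ℝ (fun _ : PP n => (1:ℂ)) p (dir o) = _
      simp [expd]
  | cons F Fs ih =>
      rw [prodL_cons, Dd_mul (interp_contDiff hA h0 F) (prodL_contDiff hA h0 Fs) (dir o),
        Dd_interp hA h0 o F, ih]
      funext p
      rw [show expd o (F :: Fs) = ((dSpec o F).1, (dSpec o F).2 ++ Fs) ::
        (expd o Fs).map (fun sG => (sG.1, F :: sG.2)) from rfl]
      rw [List.map_cons, List.sum_cons, List.map_map]
      congr 1
      · rw [prodL_append]
        rw [smul_mul_assoc]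
      · rw [mul_listSum (interp A F p)]
        refine congrArg List.sum ?_
        refine List.map_congr_left ?_
        intro sG _
        simp only [Function.comp_apply, prodL_cons]
        rw [mul_smul_comm]

lemma expd_mem (μ : ℝ) (o : Op n) :
    ∀ {Fs : List (Option (List (Op n)))} {s : ℝ} {G}, (s, G) ∈ expd o Fs →
      (s = 1 ∨ s = -1) ∧ swt μ G = wOp μ o + swt μ Fs ∧ cnt G = cnt Fs := by
  intro Fs
  induction Fs with
  | nil => intro s G h; simp [expd] at h
  | cons F Fs ih =>
      intro s G h
      rw [show expd o (F :: Fs) = ((dSpec o F).1, (dSpec o F).2 ++ Fs) ::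
        (expd o Fs).map (fun sG => (sG.1, F :: sG.2)) from rfl] at h
      rcases List.mem_cons.mp h with h | h
      · have hs : s = (dSpec o F).1 ∧ G = (dSpec o F).2 ++ Fs := by
          constructor
          · exact congrArg Prod.fst h
          · exact congrArg Prod.snd h
        obtain ⟨rfl, rfl⟩ := hs
        cases F with
        | none =>
            refine ⟨Or.inr rfl, ?_, ?_⟩
            · simp [dSpec, swt, wt, wOp]
            · simp [dSpec, cnt]
              try ring
        | some w =>
            refine ⟨Or.inl rfl, ?_, ?_⟩
            · simp [dSpec, swt, wt_cons]
              try ring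
            · simp [dSpec, cnt]
      · obtain ⟨⟨s', G'⟩, hmem, heq⟩ := List.mem_map.mp h
        have hs : s = s' ∧ G = F :: G' := by
          constructor
          · exact (congrArg Prod.fst heq).symm
          · exact (congrArg Prod.snd heq).symm
        obtain ⟨rfl, rfl⟩ := hs
        obtain ⟨h1, h2, h3⟩ := ih hmem
        refine ⟨h1, ?_, ?_⟩
        · simp only [swt, List.map_cons, List.sum_cons] at *
          rw [h2]; ring
        · simp only [cnt, List.map_cons, List.sum_cons] at *
          rw [h3]


/-! ### The fundamental bounds -/

section Bounds

variable (μ : ℝ) {A : PP n → ℂ}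

lemma prod_bound (hpos : ∀ p, 0 < ‖A p‖)
    (hder : ∀ w : List (Op n), ∃ C > 0, ∀ p, ‖Dl w A p‖ ≤ C * jb p.2 ^ wt μ w * ‖A p‖) :
    ∀ Fs : List (Option (List (Op n))), ∃ C > 0, ∀ p,
      ‖prodL A Fs p‖ ≤ C * jb p.2 ^ swt μ Fs * ‖A p‖ ^ cnt Fs := by
  intro Fs
  induction Fs with
  | nil =>
      refine ⟨1, one_pos, fun p => ?_⟩
      simp [prodL, swt, cnt]
  | cons F Fs ih =>
      obtain ⟨C2, hC2, h2⟩ := ih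
      have hjb : ∀ ξ : EE n, (0:ℝ) < jb ξ := jb_pos
      cases F with
      | none =>
          refine ⟨C2, hC2, fun p => ?_⟩
          rw [prodL_cons]
          have hs : swt μ (none :: Fs) = swt μ Fs := by simp [swt]
          have hc : cnt (none :: Fs) = -1 + cnt Fs := by simp [cnt]
          rw [hs, hc, norm_mul]
          have h3 : ‖interp A none p‖ = ‖A p‖⁻¹ := by simp [interp]
          rw [h3, zpow_add₀ (ne_of_gt (hpos p)), zpow_neg_one]
          calc ‖A p‖⁻¹ * ‖prodL A Fs p‖
              ≤ ‖A p‖⁻¹ * (C2 * jb p.2 ^ swt μ Fs * ‖A p‖ ^ cnt Fs) := by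
                exact mul_le_mul_of_nonneg_left (h2 p) (inv_nonneg.mpr (norm_nonneg _))
            _ = C2 * jb p.2 ^ swt μ Fs * (‖A p‖⁻¹ * ‖A p‖ ^ cnt Fs) := by ring
      | some w =>
          obtain ⟨Cw, hCw, hw⟩ := hder w
          refine ⟨Cw * C2, by positivity, fun p => ?_⟩
          rw [prodL_cons]
          have hs : swt μ (some w :: Fs) = wt μ w + swt μ Fs := by simp [swt]
          have hc : cnt (some w :: Fs) = 1 + cnt Fs := by simp [cnt]
          rw [hs, hc, norm_mul]
          have h3 : ‖interp A (some w) p‖ = ‖Dl w A p‖ := rfl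
          rw [h3]
          have key : ‖Dl w A p‖ * ‖prodL A Fs p‖
              ≤ (Cw * jb p.2 ^ wt μ w * ‖A p‖) * (C2 * jb p.2 ^ swt μ Fs * ‖A p‖ ^ cnt Fs) :=
            mul_le_mul (hw p) (h2 p) (norm_nonneg _)
              (mul_nonneg (mul_nonneg hCw.le (Real.rpow_pos_of_pos (jb_pos p.2) _).le)
                (norm_nonneg _))
          refine key.trans (le_of_eq ?_)
          rw [Real.rpow_add (hjb p.2), zpow_add₀ (ne_of_gt (hpos p)), zpow_one]
          ring

lemma main_bound (hA : ContDiff ℝ SS A) (h0 : ∀ p, A p ≠ 0) (hpos : ∀ p, 0 < ‖A p‖)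
    (hder : ∀ w : List (Op n), ∃ C > 0, ∀ p, ‖Dl w A p‖ ≤ C * jb p.2 ^ wt μ w * ‖A p‖) :
    ∀ (u : List (Op n)) (Fs : List (Option (List (Op n)))), ∃ C > 0, ∀ p,
      ‖Dr u (prodL A Fs) p‖ ≤ C * jb p.2 ^ (wt μ u + swt μ Fs) * ‖A p‖ ^ cnt Fs := by
  intro u
  induction u with
  | nil =>
      intro Fs
      obtain ⟨C, hC, h⟩ := prod_bound μ hpos hder Fs
      exact ⟨C, hC, fun p => by simpa using h p⟩
  | cons o u ih =>
      intro Fs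
      -- uniform bound over the expansion list
      have key : ∀ L : List (ℝ × List (Option (List (Op n)))),
          (∀ sG ∈ L, (sG.1 = 1 ∨ sG.1 = -1) ∧ swt μ sG.2 = wOp μ o + swt μ Fs ∧
            cnt sG.2 = cnt Fs) →
          ∃ C > 0, ∀ p,
            ((L.map (fun sG => ‖sG.1 • Dr u (prodL A sG.2) p‖)).sum
              ≤ C * jb p.2 ^ (wt μ (o :: u) + swt μ Fs) * ‖A p‖ ^ cnt Fs) := by
        intro L
        induction L with
        | nil =>
            intro _
            refine ⟨1, one_pos, fun p => ?_⟩
            simp only [List.map_nil, List.sum_nil, one_mul]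
            exact mul_nonneg (Real.rpow_pos_of_pos (jb_pos p.2) _).le
              (zpow_nonneg (norm_nonneg _) _)
        | cons sG L ihL =>
            intro hL
            obtain ⟨C2, hC2, h2⟩ := ihL fun x hx => hL x (by simp [hx])
            obtain ⟨C1, hC1, h1⟩ := ih sG.2
            obtain ⟨hsgn, hswt, hcnt⟩ := hL sG (by simp)
            refine ⟨C1 + C2, by positivity, fun p => ?_⟩
            rw [List.map_cons, List.sum_cons]
            have hn : ‖sG.1 • Dr u (prodL A sG.2) p‖ = ‖Dr u (prodL A sG.2) p‖ := by
              rw [norm_smul]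
              rcases hsgn with h | h <;> rw [h] <;> simp
            have hb : ‖Dr u (prodL A sG.2) p‖
                ≤ C1 * jb p.2 ^ (wt μ (o :: u) + swt μ Fs) * ‖A p‖ ^ cnt Fs := by
              have := h1 p
              rw [hswt, hcnt] at this
              refine this.trans (le_of_eq ?_)
              rw [wt_cons]
              ring_nf
            rw [hn, add_mul, add_mul]
            exact add_le_add hb (h2 p)
      have hexp : ∀ sG ∈ expd o Fs, (sG.1 = 1 ∨ sG.1 = -1) ∧
          swt μ sG.2 = wOp μ o + swt μ Fs ∧ cnt sG.2 = cnt Fs := by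
        intro sG h
        exact expd_mem μ o (by rwa [show ((sG.1, sG.2) : ℝ × _) = sG from rfl] )
      obtain ⟨C, hC, h⟩ := key (expd o Fs) hexp
      refine ⟨C, hC, fun p => ?_⟩
      -- rewrite `Dr (o::u) (prodL A Fs)` as a sum
      have hLF : ∀ f ∈ (expd o Fs).map (fun sG => fun q => sG.1 • prodL A sG.2 q),
          ContDiff ℝ SS f := by
        intro f hf
        obtain ⟨sG, _, rfl⟩ := List.mem_map.mp hf
        exact (prodL_contDiff hA h0 sG.2).const_smul sG.1
      have e1 : Dd (dir o) (prodL A Fs)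
          = sumL ((expd o Fs).map (fun sG => fun q => sG.1 • prodL A sG.2 q)) := by
        rw [Dd_prodL hA h0 o Fs]
        funext q
        rw [sumL, List.map_map]
        rfl
      have e2 : Dr (o :: u) (prodL A Fs) p
          = ((expd o Fs).map (fun sG => sG.1 • Dr u (prodL A sG.2) p)).sum := by
        rw [Dr_cons, e1, Dr_sumL u hLF, sumL, List.map_map, List.map_map]
        congr 1
        refine List.map_congr_left ?_
        intro sG _
        simp only [Function.comp_apply]
        rw [Dr_smul (prodL_contDiff hA h0 sG.2) sG.1 u]
      have e3 : ‖Dr (o :: u) (prodL A Fs) p‖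
          ≤ (List.map (fun sG => ‖sG.1 • Dr u (prodL A sG.2) p‖) (expd o Fs)).sum := by
        rw [e2]
        have hns := norm_listSum ((expd o Fs).map (fun sG => sG.1 • Dr u (prodL A sG.2) p))
        rwa [List.map_map] at hns
      exact e3.trans (h p)
end Bounds


/-! ### Reciprocal bound -/

lemma recip_bound {μ : ℝ} {A : PP n → ℂ} (hA : ContDiff ℝ SS A) (h0 : ∀ p, A p ≠ 0)
    (hpos : ∀ p, 0 < ‖A p‖)
    (hder : ∀ w : List (Op n), ∃ C > 0, ∀ p, ‖Dl w A p‖ ≤ C * jb p.2 ^ wt μ w * ‖A p‖) :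
    ∀ u : List (Op n), ∃ C > 0, ∀ p,
      ‖Dl u (fun q => (A q)⁻¹) p‖ ≤ C * jb p.2 ^ wt μ u * ‖A p‖⁻¹ := by
  intro u
  obtain ⟨C, hC, h⟩ := main_bound μ hA h0 hpos hder u.reverse [none]
  refine ⟨C, hC, fun p => ?_⟩
  have e1 : prodL A [none] = fun q => (A q)⁻¹ := by
    funext q; simp [prodL, interp]
  have h2 := h p
  rw [e1] at h2
  rw [Dl_eq_Dr]
  have hswt : swt μ ([none] : List (Option (List (Op n)))) = 0 := by simp [swt]
  have hcnt : cnt ([none] : List (Option (List (Op n)))) = -1 := by simp [cnt]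
  rw [hswt, hcnt, wt_reverse, add_zero, zpow_neg_one] at h2
  exact h2

/-! ### Bridge between `pdX`/`pdXi` and words -/

lemma foldr_comp_apply {σ : Type*} (gs : List (σ → σ)) (x : σ) :
    gs.foldr (· ∘ ·) id x = gs.foldr (fun g y => g y) x := by
  induction gs with
  | nil => rfl
  | cons g gs ih => simp [ih]

lemma foldr_flatten' {γ σ : Type*} (L : List (List γ)) (f : γ → σ → σ) (init : σ) :
    L.flatten.foldr f init = L.foldr (fun l acc => l.foldr f acc) init := by
  induction L with
  | nil => rfl
  | cons l L ih => simp [List.foldr_append, ih]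

lemma foldr_replicate {γ σ : Type*} (k : ℕ) (i : γ) (f : γ → σ → σ) (init : σ) :
    (List.replicate k i).foldr f init = (f i)^[k] init := by
  induction k with
  | zero => rfl
  | succ k ih =>
      rw [List.replicate_succ, List.foldr_cons, ih]
      exact (Function.iterate_succ_apply' (f i) k init).symm

def idxl (α : Fin n → ℕ) : List (Fin n) :=
  ((List.finRange n).map (fun i => List.replicate (α i) i)).flatten

lemma pdM_eq {F : Type*} [NormedAddCommGroup F] [NormedSpace ℝ F] (α : Fin n → ℕ)
    (f : EE n → F) : pdM α f = (idxl α).foldr pd f := by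
  rw [pdM, List.ofFn_eq_map, foldr_comp_apply, List.foldr_map, idxl, foldr_flatten',
    List.foldr_map]
  simp only [foldr_replicate]

lemma pd_slice_right {G : PP n → ℂ} (hG : ContDiff ℝ SS G) (i : Fin n) (x ξ : EE n) :
    pd i (fun ξ' => G (x, ξ')) ξ = Dd (dir (false, i)) G (x, ξ) := by
  have h1 : HasFDerivAt (fun ξ' : EE n => ((x, ξ') : PP n))
      ((0 : EE n →L[ℝ] EE n).prod (ContinuousLinearMap.id ℝ (EE n))) ξ :=
    HasFDerivAt.prodMk (hasFDerivAt_const x ξ) (hasFDerivAt_id ξ)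
  have h2 : HasFDerivAt G (fderiv ℝ G (x, ξ)) (x, ξ) := ((Dd_diff hG) (x, ξ)).hasFDerivAt
  have h3 : HasFDerivAt (fun ξ' => G (x, ξ')) ((fderiv ℝ G (x, ξ)).comp
      ((0 : EE n →L[ℝ] EE n).prod (ContinuousLinearMap.id ℝ (EE n)))) ξ := h2.comp ξ h1
  rw [pd, h3.fderiv]
  show fderiv ℝ G (x, ξ) (((0 : EE n →L[ℝ] EE n).prod (ContinuousLinearMap.id ℝ (EE n)))
    (EuclideanSpace.single i 1)) = _
  simp [Dd, dir]

lemma pd_slice_left {G : PP n → ℂ} (hG : ContDiff ℝ SS G) (i : Fin n) (x ξ : EE n) :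
    pd i (fun x' => G (x', ξ)) x = Dd (dir (true, i)) G (x, ξ) := by
  have h1 : HasFDerivAt (fun x' : EE n => ((x', ξ) : PP n))
      ((ContinuousLinearMap.id ℝ (EE n)).prod (0 : EE n →L[ℝ] EE n)) x :=
    HasFDerivAt.prodMk (hasFDerivAt_id x) (hasFDerivAt_const ξ x)
  have h2 : HasFDerivAt G (fderiv ℝ G (x, ξ)) (x, ξ) := ((Dd_diff hG) (x, ξ)).hasFDerivAt
  have h3 : HasFDerivAt (fun x' => G (x', ξ)) ((fderiv ℝ G (x, ξ)).comp
      ((ContinuousLinearMap.id ℝ (EE n)).prod (0 : EE n →L[ℝ] EE n))) x := h2.comp x h1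
  rw [pd, h3.fderiv]
  show fderiv ℝ G (x, ξ) (((ContinuousLinearMap.id ℝ (EE n)).prod (0 : EE n →L[ℝ] EE n))
    (EuclideanSpace.single i 1)) = _
  simp [Dd, dir]

lemma sliceR {F : PP n → ℂ} (hF : ContDiff ℝ SS F) (l : List (Fin n)) (x ξ : EE n) :
    (l.foldr pd (fun ξ' => F (x, ξ'))) ξ
      = Dl (l.map (fun i => ((false, i) : Op n))) F (x, ξ) := by
  induction l generalizing ξ with
  | nil => rfl
  | cons i l ih =>
      have hG : ContDiff ℝ SS (Dl (l.map (fun i => ((false, i) : Op n))) F) :=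
        Dl_contDiff hF _
      have he : l.foldr pd (fun ξ' => F (x, ξ'))
          = fun ξ' => Dl (l.map (fun i => ((false, i) : Op n))) F (x, ξ') :=
        funext fun ξ' => ih ξ'
      rw [List.foldr_cons, he, pd_slice_right hG i x ξ, List.map_cons, Dl_cons]

lemma sliceL {F : PP n → ℂ} (hF : ContDiff ℝ SS F) (l : List (Fin n)) (x ξ : EE n) :
    (l.foldr pd (fun x' => F (x', ξ))) x
      = Dl (l.map (fun i => ((true, i) : Op n))) F (x, ξ) := by
  induction l generalizing x with
  | nil => rfl
  | cons i l ih =>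
      have hG : ContDiff ℝ SS (Dl (l.map (fun i => ((true, i) : Op n))) F) :=
        Dl_contDiff hF _
      have he : l.foldr pd (fun x' => F (x', ξ))
          = fun x' => Dl (l.map (fun i => ((true, i) : Op n))) F (x', ξ) :=
        funext fun x' => ih x'
      rw [List.foldr_cons, he, pd_slice_left hG i x ξ, List.map_cons, Dl_cons]

def ξl (α : Fin n → ℕ) : List (Op n) := (idxl α).map (fun i => (false, i))
def xl (β : Fin n → ℕ) : List (Op n) := (idxl β).map (fun i => (true, i))
def cw (α β : Fin n → ℕ) : List (Op n) := xl β ++ ξl α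

lemma bridge {q : EE n → EE n → ℂ} (hQ : ContDiff ℝ SS (fun p : PP n => q p.1 p.2))
    (α β : Fin n → ℕ) (x ξ : EE n) :
    pdX β (pdXi α q) x ξ = Dl (cw α β) (fun p : PP n => q p.1 p.2) (x, ξ) := by
  have h1 : ∀ x' : EE n, pdXi α q x' = fun ξ' => Dl (ξl α) (fun p : PP n => q p.1 p.2) (x', ξ') := by
    intro x'
    funext ξ'
    rw [pdXi, pdM_eq]
    exact sliceR hQ (idxl α) x' ξ'
  rw [pdX, pdM_eq]
  have h2 : (fun x' => pdXi α q x' ξ)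
      = fun x' => (Dl (ξl α) (fun p : PP n => q p.1 p.2)) (x', ξ) := by
    funext x'
    rw [h1 x']
  rw [h2, sliceL (Dl_contDiff hQ (ξl α)) (idxl β) x ξ, cw, Dl_append]
  rfl


/-! ### Counting and weights of canonical words -/

lemma length_idxl (α : Fin n → ℕ) : (idxl α).length = ∑ i, α i := by
  rw [idxl, List.length_flatten, List.map_map]
  have h : (List.length ∘ fun i : Fin n => List.replicate (α i) i) = α := by
    funext i; simp
  rw [h, ← List.ofFn_eq_map, List.sum_ofFn]

lemma wt_ξl (μ : ℝ) (α : Fin n → ℕ) : wt μ (ξl α) = -((∑ i, α i : ℕ) : ℝ) := by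
  rw [wt, ξl, List.map_map]
  have h : (wOp μ ∘ fun i : Fin n => ((false, i) : Op n)) = fun _ => (-1 : ℝ) := by
    funext i; simp [wOp]
  rw [h, List.map_const', List.sum_replicate, length_idxl]
  simp [nsmul_eq_mul]

lemma wt_xl (μ : ℝ) (β : Fin n → ℕ) : wt μ (xl β) = μ * ((∑ i, β i : ℕ) : ℝ) := by
  rw [wt, xl, List.map_map]
  have h : (wOp μ ∘ fun i : Fin n => ((true, i) : Op n)) = fun _ => μ := by
    funext i; simp [wOp]
  rw [h, List.map_const', List.sum_replicate, length_idxl]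
  simp [nsmul_eq_mul, mul_comm]

lemma wt_cw (μ : ℝ) (α β : Fin n → ℕ) :
    wt μ (cw α β) = -((∑ i, α i : ℕ) : ℝ) + μ * ((∑ i, β i : ℕ) : ℝ) := by
  rw [cw, wt_append, wt_ξl, wt_xl]
  ring

lemma repmap_eq (α : Fin n → ℕ) (b : Bool) :
    (idxl α).map (fun i => ((b, i) : Op n))
      = ((List.finRange n).map (fun i => List.replicate (α i) ((b, i) : Op n))).flatten := by
  rw [idxl, List.map_flatten, List.map_map]
  congr 1
  refine List.map_congr_left fun i _ => ?_
  simp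

lemma count_repmap (α : Fin n → ℕ) (b : Bool) (o : Op n) :
    (((List.finRange n).map (fun i => List.replicate (α i) ((b, i) : Op n))).flatten).count o
      = if o.1 = b then α o.2 else 0 := by
  obtain ⟨c, j⟩ := o
  rw [List.count_flatten, List.map_map]
  have h : (List.count ((c, j) : Op n) ∘ fun i : Fin n => List.replicate (α i) ((b, i) : Op n))
      = fun i : Fin n => if ((b, i) : Op n) = (c, j) then α i else 0 := by
    funext i
    rw [Function.comp_apply, List.count_replicate]
    rw [show (((b, i) : Op n) == (c, j)) = decide (((b, i) : Op n) = (c, j)) from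
      Bool.beq_eq_decide_eq _ _]
    by_cases hh : ((b, i) : Op n) = (c, j) <;> simp [hh]
  rw [h, ← List.ofFn_eq_map, List.sum_ofFn]
  by_cases hc : c = b
  · subst hc
    simp [Prod.ext_iff, eq_comm]
  · simp [Prod.ext_iff, hc]
    exact fun h => absurd h.symm hc

lemma count_cw (α β : Fin n → ℕ) (o : Op n) :
    (cw α β).count o = if o.1 then β o.2 else α o.2 := by
  rw [cw, List.count_append, xl, ξl, repmap_eq, repmap_eq, count_repmap, count_repmap]
  cases h : o.1 <;> simp

lemma count_indep {γ : Type*} (i1 i2 : BEq γ) (h1 : @LawfulBEq γ i1) (h2 : @LawfulBEq γ i2)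
    [DecidableEq γ] (a : γ) (l : List γ) :
    @List.count γ i1 a l = @List.count γ i2 a l := by
  induction l with
  | nil => rfl
  | cons b l ih =>
      rw [@List.count_cons _ i1, @List.count_cons _ i2, ih,
        show (i1.beq b a) = decide (b = a) from @Bool.beq_eq_decide_eq _ i1 h1 _ b a,
        show (i2.beq b a) = decide (b = a) from @Bool.beq_eq_decide_eq _ i2 h2 _ b a]

lemma perm_cw (u : List (Op n)) :
    u.Perm (cw (fun i => u.count ((false, i) : Op n)) (fun i => u.count ((true, i) : Op n))) := by
  have base : ∀ o : Op n, u.count o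
      = (cw (fun i => u.count ((false, i) : Op n)) (fun i => u.count ((true, i) : Op n))).count o := by
    intro o
    rw [count_cw]
    obtain ⟨b, j⟩ := o
    cases b <;> simp
  refine List.perm_iff_count.mpr fun o => ?_
  have h1 := count_indep (inferInstance : BEq (Op n))
    (@instBEqOfDecidableEq (Op n) _) inferInstance (@instLawfulBEq (Op n) _) o u
  have h2 := count_indep (inferInstance : BEq (Op n))
    (@instBEqOfDecidableEq (Op n) _) inferInstance (@instLawfulBEq (Op n) _) o
    (cw (fun i => u.count ((false, i) : Op n)) (fun i => u.count ((true, i) : Op n)))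
  exact base o

def nξ (u : List (Op n)) : ℕ := (u.map (fun o => if o.1 then 0 else 1)).sum

lemma nξ_cw (α β : Fin n → ℕ) : nξ (cw α β) = ∑ i, α i := by
  have h1 : nξ (xl β) = 0 := by
    rw [nξ, xl, List.map_map]
    have h : ((fun o : Op n => if o.1 then 0 else 1) ∘ fun i : Fin n => ((true, i) : Op n))
        = fun _ => (0 : ℕ) := by funext i; simp
    rw [h, List.map_const', List.sum_replicate]
    simp
  have h2 : nξ (ξl α) = ∑ i, α i := by
    rw [nξ, ξl, List.map_map]
    have h : ((fun o : Op n => if o.1 then 0 else 1) ∘ fun i : Fin n => ((false, i) : Op n))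
        = fun _ => (1 : ℕ) := by funext i; simp
    rw [h, List.map_const', List.sum_replicate, length_idxl]
    simp
  have h3 : nξ (cw α β) = nξ (xl β) + nξ (ξl α) := by
    rw [cw, nξ, nξ, nξ, List.map_append, List.sum_append]
  rw [h3, h1, h2, Nat.zero_add]

/-! ### All-words derivative bounds from the multi-index hypothesis -/

lemma hder_all {μ : ℝ} {a : EE n → EE n → ℂ} (hA : ContDiff ℝ SS (fun p : PP n => a p.1 p.2))
    (ha_der : ∀ α β : Fin n → ℕ, ∃ C > 0, ∀ x ξ, ‖pdX β (pdXi α a) x ξ‖ ≤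
        C * jb ξ ^ (-((∑ i, α i : ℕ) : ℝ) + μ * ((∑ i, β i : ℕ) : ℝ)) * ‖a x ξ‖) :
    ∀ w : List (Op n), ∃ C > 0, ∀ p : PP n,
      ‖Dl w (fun p : PP n => a p.1 p.2) p‖ ≤ C * jb p.2 ^ wt μ w * ‖(fun p : PP n => a p.1 p.2) p‖ := by
  intro w
  set α := fun i => w.count ((false, i) : Op n) with hα
  set β := fun i => w.count ((true, i) : Op n) with hβ
  obtain ⟨C, hC, h⟩ := ha_der α β
  refine ⟨C, hC, fun p => ?_⟩
  have hperm := perm_cw w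
  have e1 : Dl w (fun p : PP n => a p.1 p.2) = Dl (cw α β) (fun p : PP n => a p.1 p.2) :=
    Dl_perm hA hperm
  have e2 : Dl (cw α β) (fun p : PP n => a p.1 p.2) p = pdX β (pdXi α a) p.1 p.2 :=
    (bridge hA α β p.1 p.2).symm
  have e3 : wt μ w = wt μ (cw α β) := by
    rw [wt, wt]
    exact (hperm.map (wOp μ)).sum_eq
  rw [e1, e2, e3, wt_cw]
  exact h p.1 p.2

/-! ### Scaling -/

def Lmap (ε : ℝ) : PP n →L[ℝ] PP n :=
  (ContinuousLinearMap.id ℝ (EE n)).prodMap (ε • ContinuousLinearMap.id ℝ (EE n))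

lemma Lmap_apply (ε : ℝ) (p : PP n) : Lmap ε p = (p.1, ε • p.2) := rfl

lemma Lmap_dir (ε : ℝ) (o : Op n) :
    Lmap ε (dir o) = if o.1 then dir o else ε • dir o := by
  obtain ⟨b, i⟩ := o
  cases b
  · have h1 : dir ((false, i) : Op n) = ((0 : EE n), EuclideanSpace.single i (1:ℝ)) := rfl
    rw [show ((false, i) : Op n).1 = false from rfl, h1]
    simp only [Bool.false_eq_true, if_false]
    refine Prod.ext ?_ ?_
    · show (0 : EE n) = (ε • (((0 : EE n), EuclideanSpace.single i (1:ℝ)) : PP n)).1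
      simp
    · rfl
  · have h1 : dir ((true, i) : Op n) = ((EuclideanSpace.single i (1:ℝ)), (0 : EE n)) := rfl
    rw [show ((true, i) : Op n).1 = true from rfl, h1]
    simp only [if_true]
    refine Prod.ext rfl ?_
    show ε • (0 : EE n) = (0 : EE n)
    simp

lemma Dl_scale {f : PP n → ℂ} (hf : ContDiff ℝ SS f) (ε : ℝ) (u : List (Op n)) :
    Dl u (fun p => f (Lmap ε p)) = fun p => (ε ^ (nξ u) : ℝ) • Dl u f (Lmap ε p) := by
  induction u with
  | nil =>
      funext p
      simp [nξ]
  | cons o u ih =>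
      have hg : ContDiff ℝ SS (Dl u f) := Dl_contDiff hf u
      have hgc : ContDiff ℝ SS (fun p : PP n => Dl u f (Lmap ε p)) :=
        hg.comp (Lmap ε).contDiff
      rw [Dl_cons, ih, Dd_smul hgc (ε ^ nξ u) (dir o)]
      have key : ∀ p, Dd (dir o) (fun p : PP n => Dl u f (Lmap ε p)) p
          = fderiv ℝ (Dl u f) (Lmap ε p) (Lmap ε (dir o)) := by
        intro p
        have h3 : HasFDerivAt (fun p : PP n => Dl u f (Lmap ε p))
            ((fderiv ℝ (Dl u f) (Lmap ε p)).comp (Lmap ε : PP n →L[ℝ] PP n)) p :=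
          ((Dd_diff hg (Lmap ε p)).hasFDerivAt).comp p ((Lmap ε).hasFDerivAt)
        rw [Dd, h3.fderiv]
        rfl
      funext p
      rw [key p, Lmap_dir]
      cases hb : o.1
      · simp only [Bool.false_eq_true, if_false]
        rw [ContinuousLinearMap.map_smul]
        have hn : nξ (o :: u) = nξ u + 1 := by simp [nξ, hb, Nat.add_comm]
        rw [hn, smul_smul, pow_succ]
        rfl
      · simp only [if_true]
        have hn : nξ (o :: u) = nξ u := by simp [nξ, hb]
        rw [hn]
        rfl

/-! ### Bracket inequalities -/

lemma jb_smul_le {ε : ℝ} (hε0 : 0 ≤ ε) (hε1 : ε ≤ 1) (ξ : EE n) : jb (ε • ξ) ≤ jb ξ := by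
  apply Real.sqrt_le_sqrt
  have h : ‖ε • ξ‖ = ε * ‖ξ‖ := by rw [norm_smul, Real.norm_eq_abs, abs_of_nonneg hε0]
  have hε2 : ε ^ 2 ≤ 1 := by nlinarith
  have key : ε ^ 2 * ‖ξ‖ ^ 2 ≤ ‖ξ‖ ^ 2 := by nlinarith [sq_nonneg ‖ξ‖]
  rw [h]
  nlinarith [key]

lemma le_jb_smul {ε : ℝ} (hε0 : 0 < ε) (hε1 : ε ≤ 1) (ξ : EE n) :
    ε * jb ξ ≤ jb (ε • ξ) := by
  rw [jb, jb]
  rw [show ε * Real.sqrt (1 + ‖ξ‖ ^ 2) = Real.sqrt (ε ^ 2 * (1 + ‖ξ‖ ^ 2)) by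
    rw [Real.sqrt_mul (sq_nonneg ε), Real.sqrt_sq hε0.le]]
  apply Real.sqrt_le_sqrt
  have h : ‖ε • ξ‖ ^ 2 = ε ^ 2 * ‖ξ‖ ^ 2 := by
    rw [norm_smul, Real.norm_eq_abs, abs_of_pos hε0]
    ring
  nlinarith


lemma scale_ineq {μ m' : ℝ} (hμ0 : 0 < μ) (hm'l : μ - 1 ≤ m') (hm'u : m' < 0)
    {N M : ℕ} (hN : 1 ≤ N) {ε : ℝ} (hε0 : 0 < ε) (hε1 : ε < 1) (ξ : EE n) :
    ε ^ N * jb (ε • ξ) ^ (-m' - (N : ℝ) + μ * (M : ℝ))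
      ≤ ε ^ (-m') * jb ξ ^ (-m' - (N : ℝ) + μ * (M : ℝ)) := by
  set t : ℝ := (N : ℝ) + m' with ht
  have hjξ := jb_pos ξ
  have hjε := jb_pos (ε • ξ)
  have ht0 : 0 < t := by
    have h1 : (1 : ℝ) ≤ (N : ℝ) := by exact_mod_cast hN
    have := hμ0
    simp only [ht]
    linarith
  have hMμ : 0 ≤ μ * (M : ℝ) := mul_nonneg hμ0.le (Nat.cast_nonneg M)
  have hsm : jb (ε • ξ) ≤ jb ξ := jb_smul_le hε0.le hε1.le ξ
  have hge : ε * jb ξ ≤ jb (ε • ξ) := le_jb_smul hε0 hε1.le ξ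
  have h2 : jb (ε • ξ) ^ (μ * (M : ℝ)) ≤ jb ξ ^ (μ * (M : ℝ)) :=
    Real.rpow_le_rpow hjε.le hsm hMμ
  have h1 : ε ^ t * jb (ε • ξ) ^ (-t) ≤ jb ξ ^ (-t) := by
    have hx : 0 < ε * jb ξ := by positivity
    have hmono := Real.rpow_le_rpow_of_nonpos hx hge (neg_nonpos.mpr ht0.le)
    have hmul : (ε * jb ξ) ^ (-t) = ε ^ (-t) * jb ξ ^ (-t) := Real.mul_rpow hε0.le hjξ.le
    calc ε ^ t * jb (ε • ξ) ^ (-t)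
        ≤ ε ^ t * (ε ^ (-t) * jb ξ ^ (-t)) := by
          refine mul_le_mul_of_nonneg_left ?_ (Real.rpow_nonneg hε0.le t)
          rw [← hmul]
          exact hmono
      _ = jb ξ ^ (-t) := by
          rw [← mul_assoc, ← Real.rpow_add hε0]
          simp
  have e1 : -m' - (N : ℝ) + μ * (M : ℝ) = (-t) + μ * (M : ℝ) := by rw [ht]; ring
  have e2 : (ε : ℝ) ^ N = ε ^ (-m') * ε ^ t := by
    rw [← Real.rpow_natCast ε N, ← Real.rpow_add hε0]
    congr 1
    rw [ht]; ring
  rw [e1, Real.rpow_add hjε, Real.rpow_add hjξ, e2]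
  calc ε ^ (-m') * ε ^ t * (jb (ε • ξ) ^ (-t) * jb (ε • ξ) ^ (μ * (M : ℝ)))
      = ε ^ (-m') * ((ε ^ t * jb (ε • ξ) ^ (-t)) * jb (ε • ξ) ^ (μ * (M : ℝ))) := by ring
    _ ≤ ε ^ (-m') * (jb ξ ^ (-t) * jb ξ ^ (μ * (M : ℝ))) := by
        refine mul_le_mul_of_nonneg_left ?_ (Real.rpow_nonneg hε0.le _)
        exact mul_le_mul h1 h2 (Real.rpow_nonneg hjε.le _) (Real.rpow_nonneg hjξ.le _)

theorem stmt_17' {n : ℕ} (μ : ℝ) (hμ : μ ∈ Set.Ioo (0 : ℝ) 1)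
    (m' : ℝ) (hm' : m' ∈ Set.Ico (μ - 1) 0)
    (a : EuclideanSpace ℝ (Fin n) → EuclideanSpace ℝ (Fin n) → ℂ)
    (ha_smooth : ContDiff ℝ (⊤ : ℕ∞)
      (fun p : EuclideanSpace ℝ (Fin n) × EuclideanSpace ℝ (Fin n) => a p.1 p.2))
    (C₀ : ℝ) (hC₀ : 0 < C₀)
    (ha_ell : ∀ x ξ, C₀ * jb ξ ^ m' ≤ ‖a x ξ‖)
    (ha_der : ∀ α β : Fin n → ℕ, ∃ C > 0, ∀ x ξ,
      ‖pdX β (pdXi α a) x ξ‖ ≤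
        C * jb ξ ^ (-((∑ i, α i : ℕ) : ℝ) + μ * ((∑ i, β i : ℕ) : ℝ)) * ‖a x ξ‖) :
    ∀ α β : Fin n → ℕ, α ≠ 0 → ∃ C' > 0, ∀ ε ∈ Set.Ioo (0 : ℝ) 1, ∀ x ξ,
      ‖pdX β (pdXi α (fun x' ξ' => (a x' (ε • ξ'))⁻¹)) x ξ‖ ≤
        C' * ε ^ (-m') * jb ξ ^ (-m' - ((∑ i, α i : ℕ) : ℝ) + μ * ((∑ i, β i : ℕ) : ℝ)) := by
  intro α β hα
  set A : PP n → ℂ := fun p => a p.1 p.2 with hAdef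
  have hA : ContDiff ℝ SS A := ha_smooth
  have hpos : ∀ p : PP n, 0 < ‖A p‖ := fun p =>
    lt_of_lt_of_le (mul_pos hC₀ (Real.rpow_pos_of_pos (jb_pos p.2) m')) (ha_ell p.1 p.2)
  have h0 : ∀ p : PP n, A p ≠ 0 := fun p => norm_pos_iff.mp (hpos p)
  have hder := hder_all hA ha_der
  obtain ⟨C1, hC1, h1⟩ := recip_bound hA h0 hpos hder (cw α β)
  refine ⟨C1 * C₀⁻¹, by positivity, ?_⟩
  rintro ε ⟨hε0, hε1⟩ x ξ
  have hN : 1 ≤ ∑ i, α i := by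
    obtain ⟨i, hi⟩ := Function.ne_iff.mp hα
    calc 1 ≤ α i := Nat.one_le_iff_ne_zero.mpr hi
      _ ≤ ∑ j, α j := Finset.single_le_sum (fun j _ => Nat.zero_le (α j)) (Finset.mem_univ i)
  have hQ : ContDiff ℝ SS (fun p : PP n => (a p.1 (ε • p.2))⁻¹) :=
    (hA.inv h0).comp (Lmap ε).contDiff
  have hb := bridge (q := fun x' ξ' => (a x' (ε • ξ'))⁻¹) hQ α β x ξ
  rw [hb]
  have hscale := Dl_scale (f := fun q => (A q)⁻¹) (hA.inv h0) ε (cw α β)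
  rw [show (fun p : PP n => (a p.1 (ε • p.2))⁻¹)
      = (fun p : PP n => (fun q : PP n => (A q)⁻¹) (Lmap ε p)) from rfl, hscale]
  have hL : Lmap ε ((x, ξ) : PP n) = ((x, ε • ξ) : PP n) := rfl
  rw [show ((fun p : PP n => (ε ^ nξ (cw α β) : ℝ) • Dl (cw α β) (fun q => (A q)⁻¹) (Lmap ε p))
      ((x, ξ) : PP n))
      = (ε ^ nξ (cw α β) : ℝ) • Dl (cw α β) (fun q => (A q)⁻¹) ((x, ε • ξ) : PP n) from rfl]
  rw [norm_smul, Real.norm_eq_abs, abs_of_pos (pow_pos hε0 _), nξ_cw]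
  -- bound the reciprocal derivative at the scaled point
  have hb1 := h1 ((x, ε • ξ) : PP n)
  rw [wt_cw] at hb1
  have hb2 : ‖A ((x, ε • ξ) : PP n)‖⁻¹ ≤ C₀⁻¹ * jb (ε • ξ) ^ (-m') := by
    have he := ha_ell x (ε • ξ)
    have hpos2 : (0:ℝ) < C₀ * jb (ε • ξ) ^ m' := mul_pos hC₀ (Real.rpow_pos_of_pos (jb_pos (ε • ξ)) m')
    calc ‖A ((x, ε • ξ) : PP n)‖⁻¹ ≤ (C₀ * jb (ε • ξ) ^ m')⁻¹ := by
          exact inv_anti₀ hpos2 he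
      _ = C₀⁻¹ * jb (ε • ξ) ^ (-m') := by
          rw [mul_inv, ← Real.rpow_neg (jb_pos (ε • ξ)).le]
  set N := ∑ i, α i
  set M := ∑ i, β i
  have hchain : ‖Dl (cw α β) (fun q => (A q)⁻¹) ((x, ε • ξ) : PP n)‖
      ≤ C1 * C₀⁻¹ * jb (ε • ξ) ^ (-m' - (N : ℝ) + μ * (M : ℝ)) := by
    calc ‖Dl (cw α β) (fun q => (A q)⁻¹) ((x, ε • ξ) : PP n)‖
        ≤ C1 * jb (ε • ξ) ^ (-(N : ℝ) + μ * (M : ℝ)) * ‖A ((x, ε • ξ) : PP n)‖⁻¹ := hb1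
      _ ≤ C1 * jb (ε • ξ) ^ (-(N : ℝ) + μ * (M : ℝ)) * (C₀⁻¹ * jb (ε • ξ) ^ (-m')) := by
          refine mul_le_mul_of_nonneg_left hb2 ?_
          exact mul_nonneg hC1.le (Real.rpow_nonneg (jb_pos _).le _)
      _ = C1 * C₀⁻¹ * jb (ε • ξ) ^ (-m' - (N : ℝ) + μ * (M : ℝ)) := by
          rw [show jb (ε • ξ) ^ (-m' - (N : ℝ) + μ * (M : ℝ))
              = jb (ε • ξ) ^ (-(N : ℝ) + μ * (M : ℝ)) * jb (ε • ξ) ^ (-m') by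
            rw [← Real.rpow_add (jb_pos (ε • ξ))]; congr 1; ring]
          ring
  calc ε ^ N * ‖Dl (cw α β) (fun q => (A q)⁻¹) ((x, ε • ξ) : PP n)‖
      ≤ ε ^ N * (C1 * C₀⁻¹ * jb (ε • ξ) ^ (-m' - (N : ℝ) + μ * (M : ℝ))) :=
        mul_le_mul_of_nonneg_left hchain (pow_nonneg hε0.le N)
    _ = C1 * C₀⁻¹ * (ε ^ N * jb (ε • ξ) ^ (-m' - (N : ℝ) + μ * (M : ℝ))) := by ring
    _ ≤ C1 * C₀⁻¹ * (ε ^ (-m') * jb ξ ^ (-m' - (N : ℝ) + μ * (M : ℝ))) := by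
        refine mul_le_mul_of_nonneg_left ?_ (by positivity)
        exact scale_ineq hμ.1 hm'.1 hm'.2 hN hε0 hε1 ξ
    _ = C1 * C₀⁻¹ * ε ^ (-m') * jb ξ ^ (-m' - (N : ℝ) + μ * (M : ℝ)) := by ring

end S17


/-- Smallness for rescaled reciprocal symbols: under ellipticity of order `m' ∈ [μ-1, 0)` and
relative derivative bounds for `a`, for all multi-indices `α ≠ 0`, `β` there is a constant
`C'` independent of `ε ∈ (0,1)` with
`|∂_x^β ∂_ξ^α (1/a_ε)(x,ξ)| ≤ C' ε^{-m'} ⟨ξ⟩^{-m'-|α|+μ|β|}`, where `a_ε(x,ξ) = a(x,εξ)`. -/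
theorem stmt_17 {n : ℕ} (μ : ℝ) (hμ : μ ∈ Set.Ioo (0 : ℝ) 1)
    (m' : ℝ) (hm' : m' ∈ Set.Ico (μ - 1) 0)
    (a : EuclideanSpace ℝ (Fin n) → EuclideanSpace ℝ (Fin n) → ℂ)
    (ha_smooth : ContDiff ℝ (⊤ : ℕ∞)
      (fun p : EuclideanSpace ℝ (Fin n) × EuclideanSpace ℝ (Fin n) => a p.1 p.2))
    (C₀ : ℝ) (hC₀ : 0 < C₀)
    (ha_ell : ∀ x ξ, C₀ * jb ξ ^ m' ≤ ‖a x ξ‖)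
    (ha_der : ∀ α β : Fin n → ℕ, ∃ C > 0, ∀ x ξ,
      ‖pdX β (pdXi α a) x ξ‖ ≤
        C * jb ξ ^ (-((∑ i, α i : ℕ) : ℝ) + μ * ((∑ i, β i : ℕ) : ℝ)) * ‖a x ξ‖) :
    ∀ α β : Fin n → ℕ, α ≠ 0 → ∃ C' > 0, ∀ ε ∈ Set.Ioo (0 : ℝ) 1, ∀ x ξ,
      ‖pdX β (pdXi α (fun x' ξ' => (a x' (ε • ξ'))⁻¹)) x ξ‖ ≤
        C' * ε ^ (-m') * jb ξ ^ (-m' - ((∑ i, α i : ℕ) : ℝ) + μ * ((∑ i, β i : ℕ) : ℝ)) :=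
  S17.stmt_17' μ hμ m' hm' a ha_smooth C₀ hC₀ ha_ell ha_der
end
end
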